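/- Every reverse well-ordered set (every nonempty subset has a greatest element) is sub-representable. -/

import Mathlib

def SubRepresentable (α : Type*) [PartialOrder α] : Prop :=
  ∃ g : Set α → Set α,
    (∀ P₁ P₂ : Set α, Nonempty (↥P₁ ↪o ↥P₂) ↔ g P₁ ⊆ g P₂) ∧
    ∀ P₁ : Set α, Nonempty (↥P₁ ↪o ↥(g P₁)) ∧ Nonempty (↥(g P₁) ↪o ↥P₁)

section Aux

open Ordinal

variable {α : Type*} [LinearOrder α] [WellFoundedGT α]

/-- The (dual) order type of a subset. -/
noncomputable def dualType (P : Set α) : Ordinal :=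
  Ordinal.type (Subrel ((· > ·) : α → α → Prop) (· ∈ P))

lemma dualType_le_type (P : Set α) :
    dualType P ≤ Ordinal.type ((· > ·) : α → α → Prop) :=
  (Subrel.relEmbedding _ (· ∈ P)).ordinal_type_le

/-- Order embeddings of subsets correspond to relation embeddings of the dual relation. -/
lemma nonempty_orderEmbedding_iff_relEmbedding (P Q : Set α) :
    Nonempty (↥P ↪o ↥Q) ↔
      Nonempty (Subrel ((· > ·) : α → α → Prop) (· ∈ P) ↪r Subrel ((· > ·) : α → α → Prop) (· ∈ Q)) := by
  constructor
  · rintro ⟨f⟩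
    refine ⟨⟨f.toEmbedding, ?_⟩⟩
    intro a b
    show ((f b : α) < (f a : α)) ↔ ((b : α) < (a : α))
    rw [Subtype.coe_lt_coe, Subtype.coe_lt_coe]
    exact f.lt_iff_lt
  · rintro ⟨e⟩
    refine ⟨OrderEmbedding.ofStrictMono (fun x => e x) ?_⟩
    intro x y hxy
    have : Subrel ((· > ·) : α → α → Prop) (· ∈ P) y x := hxy
    have h2 : Subrel ((· > ·) : α → α → Prop) (· ∈ Q) (e y) (e x) := e.map_rel_iff.mpr this
    exact Subtype.coe_lt_coe.mp h2

lemma nonempty_orderEmbedding_iff_dualType_le (P Q : Set α) :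
    Nonempty (↥P ↪o ↥Q) ↔ dualType P ≤ dualType Q := by
  rw [nonempty_orderEmbedding_iff_relEmbedding, dualType, dualType, Ordinal.type_le_iff']

end Aux

theorem reverseWellOrdered_subrep (α : Type*) [LinearOrder α]
    (hwo : ∀ S : Set α, S.Nonempty → ∃ m ∈ S, ∀ s ∈ S, s ≤ m) :
    SubRepresentable α := by
  classical
  haveI : WellFoundedGT α := by
    constructor
    rw [WellFounded.wellFounded_iff_has_min]
    intro s hs
    obtain ⟨m, hm, hm'⟩ := hwo s hs
    exact ⟨m, hm, fun x hx => not_lt.mpr (hm' x hx)⟩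
  set r : α → α → Prop := (· > ·) with hr
  -- the representative map
  refine ⟨fun P => {x : α | Ordinal.typein r x < dualType P}, ?_, ?_⟩
  · intro P Q
    rw [nonempty_orderEmbedding_iff_dualType_le]
    constructor
    · intro h x hx
      simp only [Set.mem_setOf_eq] at hx ⊢
      exact hx.trans_le h
    · intro h
      by_contra hlt
      push_neg at hlt
      have hQ : dualType Q < Ordinal.type r := lt_of_lt_of_le hlt (dualType_le_type P)
      obtain ⟨x, hx⟩ := Ordinal.typein_surj r hQ
      have : Ordinal.typein r x < dualType P := by rw [hx]; exact hlt
      have := h this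
      simp only [Set.mem_setOf_eq, hx] at this
      exact lt_irrefl _ this
  · intro P
    -- it suffices that the dual types agree
    suffices hsuf : dualType {x : α | Ordinal.typein r x < dualType P} = dualType P by
      constructor
      · rw [nonempty_orderEmbedding_iff_dualType_le, hsuf]
      · rw [nonempty_orderEmbedding_iff_dualType_le, hsuf]
    rcases lt_or_eq_of_le (dualType_le_type P) with h | h
    · obtain ⟨x, hx⟩ := Ordinal.typein_surj r h
      have hset : {y : α | Ordinal.typein r y < dualType P} = {y : α | r y x} := by
        ext y
        simp only [Set.mem_setOf_eq, ← hx, Ordinal.typein_lt_typein]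
      rw [hset]
      show Ordinal.type (Subrel r (r · x)) = dualType P
      rw [Ordinal.type_subrel, hx]
    · have hset : {y : α | Ordinal.typein r y < dualType P} = Set.univ := by
        ext y
        simp only [Set.mem_setOf_eq, Set.mem_univ, iff_true, h]
        exact Ordinal.typein_lt_type r y
      rw [hset]
      have : Ordinal.type (Subrel r (· ∈ (Set.univ : Set α))) = Ordinal.type r := by
        apply Ordinal.type_eq.mpr
        exact ⟨⟨Equiv.Set.univ α, Iff.rfl⟩⟩
      rw [dualType, this, h]
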